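/- Let G be a connected graph of order n ≥ 2 and π a permutation of V(G). Then γ(πG) = γ(G) if and only if G has a minimum dominating set D admitting a partition D = D₁ ∪ D₂ such that D₁ dominates V(G)∖D₂, π(D) is a minimum dominating set of G, and π(D₂) dominates V(G)∖π(D₁). -/
import Mathlib


open SimpleGraph

variable {V : Type*}

/-- `A` dominates `B`: every vertex of `B` is in the closed neighborhood of some vertex of `A`. -/
def Dominates (G : SimpleGraph V) (A B : Set V) : Prop :=
  ∀ b ∈ B, ∃ a ∈ A, a = b ∨ G.Adj a b

/-- `D` is a dominating set of `G`. -/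
def IsDomSet (G : SimpleGraph V) (D : Set V) : Prop :=
  Dominates G D Set.univ

/-- The domination number of `G`. -/
noncomputable def domNum (G : SimpleGraph V) : ℕ :=
  sInf {n | ∃ D : Set V, IsDomSet G D ∧ D.ncard = n}

/-- The prism of `G` with respect to a permutation `π`: two disjoint copies of `G`
joined by the perfect matching `u – π u`. -/
def prism (G : SimpleGraph V) (π : Equiv.Perm V) : SimpleGraph (V ⊕ V) :=
  SimpleGraph.fromRel (fun a b =>
    match a, b with
    | Sum.inl u, Sum.inl v => G.Adj u v
    | Sum.inr u, Sum.inr v => G.Adj u v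
    | Sum.inl u, Sum.inr v => v = π u
    | Sum.inr _, Sum.inl _ => False)

/-- `G` is a universal fixer. -/
def IsUniversalFixer (G : SimpleGraph V) : Prop :=
  ∀ π : Equiv.Perm V, domNum (prism G π) = domNum G

/-- `D` is a γ-set (minimum dominating set) of `G`. -/
def IsGammaSet (G : SimpleGraph V) (D : Set V) : Prop :=
  IsDomSet G D ∧ D.ncard = domNum G

/-- `D = [D₁, D₂]` is a symmetric γ-set of `G`. -/
def IsSymGammaSet (G : SimpleGraph V) (D D1 D2 : Set V) : Prop :=
  IsGammaSet G D ∧ D = D1 ∪ D2 ∧ Disjoint D1 D2 ∧ D1.Nonempty ∧ D2.Nonempty ∧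
    Dominates G D1 (Set.univ \ D2) ∧ Dominates G D2 (Set.univ \ D1)

/-- `S` is a 2-packing: closed neighborhoods of distinct vertices of `S` are disjoint. -/
def IsTwoPacking (G : SimpleGraph V) (S : Set V) : Prop :=
  ∀ x ∈ S, ∀ y ∈ S, x ≠ y →
    Disjoint (insert x (G.neighborSet x)) (insert y (G.neighborSet y))

/-- `D` is an even symmetric γ-set of `G`. -/
def IsEvenSymGammaSet (G : SimpleGraph V) (D : Set V) : Prop :=
  ∃ D1 D2, IsSymGammaSet G D D1 D2 ∧ D1.ncard = D2.ncard

/- ### Auxiliary lemmas -/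

lemma aux_isDomSet_univ (G : SimpleGraph V) : IsDomSet G Set.univ :=
  fun b _ => ⟨b, trivial, Or.inl rfl⟩

lemma aux_domNum_le (G : SimpleGraph V) {D : Set V} (h : IsDomSet G D) :
    domNum G ≤ D.ncard :=
  Nat.sInf_le ⟨D, h, rfl⟩

lemma aux_exists_gammaSet (G : SimpleGraph V) : ∃ D, IsGammaSet G D := by
  have h : domNum G ∈ {n | ∃ D : Set V, IsDomSet G D ∧ D.ncard = n} :=
    Nat.sInf_mem ⟨Set.univ.ncard, Set.univ, aux_isDomSet_univ G, rfl⟩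
  obtain ⟨D, hD, hc⟩ := h
  exact ⟨D, hD, hc⟩

lemma prism_adj_inl_inl {G : SimpleGraph V} {π : Equiv.Perm V} {u v : V} :
    (prism G π).Adj (Sum.inl u) (Sum.inl v) ↔ G.Adj u v := by
  simp only [prism, SimpleGraph.fromRel_adj]
  constructor
  · rintro ⟨-, h | h⟩
    · exact h
    · exact h.symm
  · intro h
    exact ⟨by simpa using h.ne, Or.inl h⟩

lemma prism_adj_inr_inr {G : SimpleGraph V} {π : Equiv.Perm V} {u v : V} :
    (prism G π).Adj (Sum.inr u) (Sum.inr v) ↔ G.Adj u v := by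
  simp only [prism, SimpleGraph.fromRel_adj]
  constructor
  · rintro ⟨-, h | h⟩
    · exact h
    · exact h.symm
  · intro h
    exact ⟨by simpa using h.ne, Or.inl h⟩

lemma prism_adj_inl_inr {G : SimpleGraph V} {π : Equiv.Perm V} {u v : V} :
    (prism G π).Adj (Sum.inl u) (Sum.inr v) ↔ v = π u := by
  simp only [prism, SimpleGraph.fromRel_adj]
  constructor
  · rintro ⟨-, h | h⟩
    · exact h
    · exact h.elim
  · intro h
    exact ⟨by simp, Or.inl h⟩

lemma prism_adj_inr_inl {G : SimpleGraph V} {π : Equiv.Perm V} {u v : V} :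
    (prism G π).Adj (Sum.inr u) (Sum.inl v) ↔ u = π v := by
  simp only [prism, SimpleGraph.fromRel_adj]
  constructor
  · rintro ⟨-, h | h⟩
    · exact h.elim
    · exact h
  · intro h
    exact ⟨by simp, Or.inr h⟩

lemma aux_sum_set_eq (S : Set (V ⊕ V)) :
    S = Sum.inl '' (Sum.inl ⁻¹' S) ∪ Sum.inr '' (Sum.inr ⁻¹' S) := by
  ext x
  cases x <;> simp

lemma aux_sum_set_ncard [Fintype V] (S : Set (V ⊕ V)) :
    S.ncard = (Sum.inl ⁻¹' S).ncard + (Sum.inr ⁻¹' S).ncard := by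
  conv_lhs => rw [aux_sum_set_eq S]
  rw [Set.ncard_union_eq (by
        rw [Set.disjoint_left]
        rintro x ⟨a, -, rfl⟩ ⟨b, -, hb⟩
        exact Sum.inl_ne_inr hb.symm)]
  rw [Set.ncard_image_of_injective _ Sum.inl_injective,
    Set.ncard_image_of_injective _ Sum.inr_injective]

lemma aux_proj_domSet {G : SimpleGraph V} {π : Equiv.Perm V} {S : Set (V ⊕ V)}
    (hS : IsDomSet (prism G π) S) :
    IsDomSet G (Sum.inl ⁻¹' S ∪ (fun v => π.symm v) '' (Sum.inr ⁻¹' S)) := by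
  intro v _
  obtain ⟨s, hs, hadj⟩ := hS (Sum.inl v) trivial
  cases s with
  | inl a =>
      refine ⟨a, Or.inl hs, ?_⟩
      rcases hadj with h | h
      · exact Or.inl (Sum.inl.inj h)
      · exact Or.inr (prism_adj_inl_inl.mp h)
  | inr b =>
      rcases hadj with h | h
      · exact absurd h (by simp)
      · have hb : b = π v := prism_adj_inr_inl.mp h
        exact ⟨v, Or.inr ⟨b, hs, by rw [hb]; simp⟩, Or.inl rfl⟩

lemma aux_domNum_le_prism [Fintype V] (G : SimpleGraph V) (π : Equiv.Perm V) :
    domNum G ≤ domNum (prism G π) := by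
  obtain ⟨S, hSdom, hScard⟩ := aux_exists_gammaSet (prism G π)
  calc domNum G ≤ (Sum.inl ⁻¹' S ∪ (fun v => π.symm v) '' (Sum.inr ⁻¹' S)).ncard :=
        aux_domNum_le G (aux_proj_domSet hSdom)
    _ ≤ (Sum.inl ⁻¹' S).ncard + ((fun v => π.symm v) '' (Sum.inr ⁻¹' S)).ncard :=
        Set.ncard_union_le _ _
    _ = (Sum.inl ⁻¹' S).ncard + (Sum.inr ⁻¹' S).ncard := by
        rw [Set.ncard_image_of_injective _ π.symm.injective]
    _ = S.ncard := (aux_sum_set_ncard S).symm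
    _ = domNum (prism G π) := hScard

theorem stmt_3 [Fintype V] (G : SimpleGraph V) (hconn : G.Connected)
    (hn : 2 ≤ Fintype.card V) (π : Equiv.Perm V) :
    domNum (prism G π) = domNum G ↔
      ∃ D D1 D2 : Set V, IsGammaSet G D ∧ D = D1 ∪ D2 ∧ Disjoint D1 D2 ∧
        Dominates G D1 (Set.univ \ D2) ∧
        IsGammaSet G ((fun v => π v) '' D) ∧
        Dominates G ((fun v => π v) '' D2) (Set.univ \ ((fun v => π v) '' D1)) := by
  constructor
  · intro h
    obtain ⟨S, hSdom, hScard⟩ := aux_exists_gammaSet (prism G π)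
    set A : Set V := Sum.inl ⁻¹' S with hA
    set B : Set V := Sum.inr ⁻¹' S with hBdef
    set D2 : Set V := (fun v => π.symm v) '' B with hD2
    have hD2card : D2.ncard = B.ncard := Set.ncard_image_of_injective _ π.symm.injective
    have hπD2 : (fun v => π v) '' D2 = B := by
      rw [hD2, Set.image_image]
      simp
    have hDdom : IsDomSet G (A ∪ D2) := aux_proj_domSet hSdom
    have hcard1 : S.ncard = A.ncard + B.ncard := aux_sum_set_ncard S
    have hle : domNum G ≤ (A ∪ D2).ncard := aux_domNum_le G hDdom
    have hle2 : (A ∪ D2).ncard ≤ A.ncard + D2.ncard := Set.ncard_union_le _ _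
    have heqγ : A.ncard + D2.ncard = domNum G := by
      rw [hD2card, ← hcard1, hScard, h]
    have hDcard : (A ∪ D2).ncard = domNum G := le_antisymm (heqγ ▸ hle2) hle
    have hunion : (A ∪ D2).ncard = A.ncard + D2.ncard := by omega
    have hdisj : Disjoint A D2 := by
      have hiu := Set.ncard_inter_add_ncard_union A D2
      have h0 : (A ∩ D2).ncard = 0 := by omega
      rw [Set.ncard_eq_zero (Set.toFinite _)] at h0
      exact Set.disjoint_iff_inter_eq_empty.mpr h0
    refine ⟨A ∪ D2, A, D2, ⟨hDdom, hDcard⟩, rfl, hdisj, ?_, ⟨?_, ?_⟩, ?_⟩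
    · -- A dominates univ \ D2
      rintro v ⟨-, hv2⟩
      obtain ⟨s, hs, hadj⟩ := hSdom (Sum.inl v) trivial
      cases s with
      | inl a =>
          refine ⟨a, hs, ?_⟩
          rcases hadj with hh | hh
          · exact Or.inl (Sum.inl.inj hh)
          · exact Or.inr (prism_adj_inl_inl.mp hh)
      | inr b =>
          exfalso
          rcases hadj with hh | hh
          · exact Sum.inr_ne_inl hh
          · have hb : b = π v := prism_adj_inr_inl.mp hh
            exact hv2 ⟨b, hs, by rw [hb]; simp⟩
    · -- π '' (A ∪ D2) dominates univ
      intro v _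
      obtain ⟨s, hs, hadj⟩ := hSdom (Sum.inr v) trivial
      cases s with
      | inl a =>
          rcases hadj with hh | hh
          · exact absurd hh (Sum.inl_ne_inr)
          · have hv : v = π a := prism_adj_inl_inr.mp hh
            exact ⟨v, ⟨a, Or.inl hs, hv.symm⟩, Or.inl rfl⟩
      | inr b =>
          refine ⟨b, ?_, ?_⟩
          · rw [Set.image_union, hπD2]
            exact Or.inr hs
          · rcases hadj with hh | hh
            · exact Or.inl (Sum.inr.inj hh)
            · exact Or.inr (prism_adj_inr_inr.mp hh)
    · -- cardinality of π '' (A ∪ D2)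
      rw [Set.ncard_image_of_injective _ π.injective]
      exact hDcard
    · -- π '' D2 = B dominates univ \ π '' A
      rintro v ⟨-, hv⟩
      obtain ⟨s, hs, hadj⟩ := hSdom (Sum.inr v) trivial
      cases s with
      | inl a =>
          exfalso
          rcases hadj with hh | hh
          · exact Sum.inl_ne_inr hh
          · have hva : v = π a := prism_adj_inl_inr.mp hh
            exact hv ⟨a, hs, hva.symm⟩
      | inr b =>
          refine ⟨b, hπD2 ▸ hs, ?_⟩
          rcases hadj with hh | hh
          · exact Or.inl (Sum.inr.inj hh)
          · exact Or.inr (prism_adj_inr_inr.mp hh)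
  · rintro ⟨D, D1, D2, ⟨hDdom, hDcard⟩, hDeq, hdisj, hdom1, -, hdom2⟩
    refine le_antisymm ?_ (aux_domNum_le_prism G π)
    set S : Set (V ⊕ V) := Sum.inl '' D1 ∪ Sum.inr '' ((fun v => π v) '' D2) with hSdef
    have hSdom : IsDomSet (prism G π) S := by
      intro x _
      cases x with
      | inl v =>
          by_cases hv : v ∈ D2
          · refine ⟨Sum.inr (π v), Or.inr ⟨π v, ⟨v, hv, rfl⟩, rfl⟩, Or.inr ?_⟩
            exact prism_adj_inr_inl.mpr rfl
          · obtain ⟨a, ha, hav⟩ := hdom1 v ⟨trivial, hv⟩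
            refine ⟨Sum.inl a, Or.inl ⟨a, ha, rfl⟩, ?_⟩
            rcases hav with rfl | hadj
            · exact Or.inl rfl
            · exact Or.inr (prism_adj_inl_inl.mpr hadj)
      | inr v =>
          by_cases hv : v ∈ (fun v => π v) '' D1
          · obtain ⟨u, hu, huv⟩ := hv
            refine ⟨Sum.inl u, Or.inl ⟨u, hu, rfl⟩, Or.inr ?_⟩
            exact prism_adj_inl_inr.mpr huv.symm
          · obtain ⟨b, hb, hbv⟩ := hdom2 v ⟨trivial, hv⟩
            refine ⟨Sum.inr b, Or.inr ⟨b, hb, rfl⟩, ?_⟩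
            rcases hbv with rfl | hadj
            · exact Or.inl rfl
            · exact Or.inr (prism_adj_inr_inr.mpr hadj)
    calc domNum (prism G π) ≤ S.ncard := aux_domNum_le _ hSdom
      _ ≤ (Sum.inl '' D1).ncard + (Sum.inr '' ((fun v => π v) '' D2)).ncard :=
          Set.ncard_union_le _ _
      _ = D1.ncard + D2.ncard := by
          rw [Set.ncard_image_of_injective _ Sum.inl_injective,
            Set.ncard_image_of_injective _ Sum.inr_injective,
            Set.ncard_image_of_injective _ π.injective]
      _ = D.ncard := by rw [hDeq, Set.ncard_union_eq hdisj]
      _ = domNum G := hDcard
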